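/- arXiv:1705.06359 — 2 statements merged into one kernel-verified Lean document; each statement's English description precedes it below -/
import Mathlib

section
/- Let p, q, p', q' be integers with 0 ≤ p < q, gcd(p,q) = 1, 0 ≤ p' < q', gcd(p',q') = 1, and let σ := ℝ≥0·(1,0) + ℝ≥0·(p,q) and τ := ℝ≥0·(1,0) + ℝ≥0·(p',q'). Then there exists a matrix Ξ ∈ GL₂(ℤ) with Ξ·σ = τ (image of σ under x ↦ Ξ·x equals τ) if and only if q' = q and either p' = p or p·p' ≡ 1 (mod q). -/
/-- The cone ℝ≥0·u + ℝ≥0·v in ℝ². -/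
def cone2 (u v : ℝ × ℝ) : Set (ℝ × ℝ) :=
  {x | ∃ s t : ℝ, 0 ≤ s ∧ 0 ≤ t ∧ x = s • u + t • v}

/-- The linear map ℝ² → ℝ² given by an integer 2×2 matrix. -/
def mulMap (Ξ : Matrix (Fin 2) (Fin 2) ℤ) (x : ℝ × ℝ) : ℝ × ℝ :=
  ((Ξ 0 0 : ℝ) * x.1 + (Ξ 0 1 : ℝ) * x.2, (Ξ 1 0 : ℝ) * x.1 + (Ξ 1 1 : ℝ) * x.2)

lemma mulMap_lin (Ξ : Matrix (Fin 2) (Fin 2) ℤ) (s t : ℝ) (x y : ℝ × ℝ) :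
    mulMap Ξ (s • x + t • y) = s • mulMap Ξ x + t • mulMap Ξ y := by
  simp only [mulMap, Prod.ext_iff, Prod.fst_add, Prod.snd_add, Prod.smul_fst, Prod.smul_snd,
    smul_eq_mul]
  constructor <;> ring

lemma image_cone2 (Ξ : Matrix (Fin 2) (Fin 2) ℤ) (u v : ℝ × ℝ) :
    mulMap Ξ '' cone2 u v = cone2 (mulMap Ξ u) (mulMap Ξ v) := by
  ext x
  constructor
  · rintro ⟨y, ⟨s, t, hs, ht, rfl⟩, rfl⟩
    exact ⟨s, t, hs, ht, mulMap_lin ..⟩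
  · rintro ⟨s, t, hs, ht, rfl⟩
    exact ⟨s • u + t • v, ⟨s, t, hs, ht, rfl⟩, mulMap_lin ..⟩

lemma cone2_comm (u v : ℝ × ℝ) : cone2 u v = cone2 v u := by
  ext x
  constructor <;> rintro ⟨s, t, hs, ht, rfl⟩ <;> exact ⟨t, s, ht, hs, by rw [add_comm]⟩

lemma unique_rep {u v : ℝ × ℝ} (hdet : u.1 * v.2 - u.2 * v.1 ≠ 0)
    {s t s' t' : ℝ} (h : s • u + t • v = s' • u + t' • v) : s = s' ∧ t = t' := by
  have h1 : s * u.1 + t * v.1 = s' * u.1 + t' * v.1 := by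
    have := congrArg Prod.fst h; simpa [smul_eq_mul] using this
  have h2 : s * u.2 + t * v.2 = s' * u.2 + t' * v.2 := by
    have := congrArg Prod.snd h; simpa [smul_eq_mul] using this
  constructor
  · have e : (s - s') * (u.1 * v.2 - u.2 * v.1) = 0 := by linear_combination v.2 * h1 - v.1 * h2
    rcases mul_eq_zero.1 e with e | e
    · linarith
    · exact absurd e hdet
  · have e : (t - t') * (u.1 * v.2 - u.2 * v.1) = 0 := by linear_combination u.1 * h2 - u.2 * h1
    rcases mul_eq_zero.1 e with e | e
    · linarith
    · exact absurd e hdet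

lemma cone2_eq_cases {u v u' v' : ℝ × ℝ} (hdet : u.1 * v.2 - u.2 * v.1 ≠ 0)
    (h : cone2 u v = cone2 u' v') :
    ∃ α β : ℝ, 0 < α ∧ 0 < β ∧
      ((u' = α • u ∧ v' = β • v) ∨ (u' = α • v ∧ v' = β • u)) := by
  have hu' : u' ∈ cone2 u v := by
    rw [h]; exact ⟨1, 0, zero_le_one, le_refl 0, by simp⟩
  have hv' : v' ∈ cone2 u v := by
    rw [h]; exact ⟨0, 1, le_refl 0, zero_le_one, by simp⟩
  have hu : u ∈ cone2 u' v' := by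
    rw [← h]; exact ⟨1, 0, zero_le_one, le_refl 0, by simp⟩
  have hv : v ∈ cone2 u' v' := by
    rw [← h]; exact ⟨0, 1, le_refl 0, zero_le_one, by simp⟩
  obtain ⟨s, t, hs, ht, hus⟩ := hu'
  obtain ⟨s', t', hs', ht', hvs⟩ := hv'
  obtain ⟨a1, b1, ha1, hb1, hue⟩ := hu
  obtain ⟨a2, b2, ha2, hb2, hve⟩ := hv
  rw [hus, hvs] at hue hve
  have hue' : (1:ℝ) • u + (0:ℝ) • v = (a1 * s + b1 * s') • u + (a1 * t + b1 * t') • v := by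
    rw [one_smul, zero_smul, add_zero]
    conv_lhs => rw [hue]
    module
  have hve' : (0:ℝ) • u + (1:ℝ) • v = (a2 * s + b2 * s') • u + (a2 * t + b2 * t') • v := by
    rw [one_smul, zero_smul, zero_add]
    conv_lhs => rw [hve]
    module
  obtain ⟨e1, e2⟩ := unique_rep hdet hue'
  obtain ⟨e3, e4⟩ := unique_rep hdet hve'
  rcases eq_or_lt_of_le ht with ht0 | htpos
  · -- t = 0
    have ht'pos : 0 < t' := by
      rcases eq_or_lt_of_le ht' with h0 | h0
      · exfalso; rw [← ht0, ← h0] at e4; simp at e4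
      · exact h0
    have hb1' : b1 = 0 := by
      have : a1 * t + b1 * t' = 0 := e2.symm
      nlinarith
    have hspos : 0 < s := by nlinarith [e1.symm]
    have hb2pos : 0 < b2 := by nlinarith [e4.symm]
    have hs'0 : s' = 0 := by nlinarith [e3.symm]
    refine ⟨s, t', hspos, ht'pos, Or.inl ⟨?_, ?_⟩⟩
    · rw [hus, ← ht0]; simp
    · rw [hvs, hs'0]; simp
  · -- t > 0
    have ha1' : a1 = 0 := by nlinarith [e2.symm]
    have hb1pos : 0 < b1 := by nlinarith [e1.symm]
    have hs'pos : 0 < s' := by nlinarith [e1.symm]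
    have ht'0 : t' = 0 := by nlinarith [e2.symm]
    have ha2pos : 0 < a2 := by nlinarith [e4.symm]
    have hs0 : s = 0 := by nlinarith [e3.symm]
    refine ⟨t, s', htpos, hs'pos, Or.inr ⟨?_, ?_⟩⟩
    · rw [hus, hs0]; simp
    · rw [hvs, ht'0]; simp

set_option maxHeartbeats 1600000 in
/-- for σ = ℝ≥0·(1,0) + ℝ≥0·(p,q) and τ = ℝ≥0·(1,0) + ℝ≥0·(p',q'),
there exists Ξ ∈ GL₂(ℤ) with Ξ·σ = τ iff q' = q and (p' = p or p·p' ≡ 1 (mod q)). -/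
theorem stmt3 (p q p' q' : ℤ)
    (hp0 : 0 ≤ p) (hpq : p < q) (hgcd : Int.gcd p q = 1)
    (hp0' : 0 ≤ p') (hpq' : p' < q') (hgcd' : Int.gcd p' q' = 1) :
    (∃ Ξ : Matrix (Fin 2) (Fin 2) ℤ, (Ξ.det = 1 ∨ Ξ.det = -1) ∧
        mulMap Ξ '' cone2 (1, 0) ((p : ℝ), (q : ℝ)) = cone2 (1, 0) ((p' : ℝ), (q' : ℝ))) ↔
      (q' = q ∧ (p' = p ∨ Int.ModEq q (p * p') 1)) := by
  have hq : 0 < q := lt_of_le_of_lt hp0 hpq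
  have hq' : 0 < q' := lt_of_le_of_lt hp0' hpq'
  have hcopq : IsCoprime p q := Int.isCoprime_iff_gcd_eq_one.2 hgcd
  have hcopq' : IsCoprime p' q' := Int.isCoprime_iff_gcd_eq_one.2 hgcd'
  constructor
  · rintro ⟨Ξ, hdetΞ, himg⟩
    set a := Ξ 0 0 with ha
    set b := Ξ 0 1 with hb
    set c := Ξ 1 0 with hc
    set d := Ξ 1 1 with hd
    have hdet2 : a * d - b * c = 1 ∨ a * d - b * c = -1 := by
      rwa [Matrix.det_fin_two Ξ] at hdetΞ
    have h1 : mulMap Ξ ((1:ℝ), (0:ℝ)) = ((a:ℝ), (c:ℝ)) := by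
      simp [mulMap]
      exact ⟨rfl, rfl⟩
    have h2 : mulMap Ξ ((p:ℝ), (q:ℝ)) = (((a*p+b*q : ℤ) : ℝ), ((c*p+d*q : ℤ) : ℝ)) := by
      simp only [mulMap]; rw [← ha, ← hb, ← hc, ← hd]; push_cast; ring_nf
    rw [image_cone2, h1, h2] at himg
    have hdet : ((a:ℝ)) * ((c*p+d*q : ℤ) : ℝ) - (c:ℝ) * ((a*p+b*q : ℤ) : ℝ) ≠ 0 := by
      have : ((a:ℝ)) * ((c*p+d*q : ℤ) : ℝ) - (c:ℝ) * ((a*p+b*q : ℤ) : ℝ)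
          = (((a*d - b*c) * q : ℤ) : ℝ) := by push_cast; ring
      rw [this]
      rcases hdet2 with h | h <;> rw [h] <;>
        · simp only [ne_eq, Int.cast_eq_zero]
          intro hcon
          omega
    obtain ⟨α, β, hα, hβ, hcase | hcase⟩ := cone2_eq_cases hdet himg
    · -- no swap : (1,0) = α•(a,c), (p',q') = β•(ap+bq, cp+dq)
      obtain ⟨g1, g2⟩ := hcase
      rw [Prod.ext_iff] at g1 g2
      simp only [Prod.smul_fst, Prod.smul_snd, smul_eq_mul] at g1 g2
      obtain ⟨e1, e2⟩ := g1
      obtain ⟨e3, e4⟩ := g2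
      -- e1 : 1 = α * a, e2 : 0 = α * c, e3 : p' = β*(ap+bq), e4 : q' = β*(cp+dq)
      have hc0 : c = 0 := by
        have : (c:ℝ) = 0 := by
          rcases mul_eq_zero.1 e2.symm with h | h
          · exact absurd h (ne_of_gt hα)
          · exact h
        exact_mod_cast this
      have hapos : 0 < a := by
        by_contra hcon
        push_neg at hcon
        have : (a:ℝ) ≤ 0 := by exact_mod_cast hcon
        nlinarith
      have had : a * d = 1 ∨ a * d = -1 := by
        rw [hc0, mul_zero, sub_zero] at hdet2; exact hdet2
      have ha1 : a = 1 := by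
        have hdvd : a ∣ 1 := by
          rcases had with h | h
          · exact ⟨d, h.symm⟩
          · exact ⟨-d, by linear_combination h⟩
        exact Int.eq_one_of_dvd_one (le_of_lt hapos) hdvd
      rw [ha1, one_mul] at had
      have hqR : (0:ℝ) < (q:ℝ) := by exact_mod_cast hq
      have hq'R : (0:ℝ) < (q':ℝ) := by exact_mod_cast hq'
      have hd1 : d = 1 := by
        rcases had with h | h
        · exact h
        · exfalso
          rw [hc0, h] at e4
          push_cast at e4
          nlinarith
      rw [ha1] at e3
      rw [hc0, hd1] at e4
      push_cast at e3 e4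
      -- e3 : p' = β * (p + b*q), e4 : q' = β * q
      have hkey : (p' : ℝ) * q = (q' : ℝ) * (p + b * q) := by
        rw [e3, e4]; ring
      have hkeyZ : p' * q = q' * (p + b * q) := by exact_mod_cast hkey
      have hq'q : q' ∣ q := by
        exact hcopq'.symm.dvd_of_dvd_mul_left ⟨p + b * q, hkeyZ⟩
      have hqq' : q ∣ q' := by
        have hcop2 : IsCoprime q (p + q * b) := hcopq.symm.add_mul_left_right b
        refine hcop2.dvd_of_dvd_mul_right ⟨p', ?_⟩
        linear_combination -hkeyZ
      have hqe : q' = q := Int.dvd_antisymm (le_of_lt hq') (le_of_lt hq) hq'q hqq'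
      refine ⟨hqe, Or.inl ?_⟩
      rw [hqe] at hkeyZ
      have hp'e : p' = p + b * q := by
        have hq0 : q ≠ 0 := ne_of_gt hq
        exact mul_right_cancel₀ hq0 (by linear_combination hkeyZ : p' * q = (p + b * q) * q)
      have hplt : p' < q := by rw [← hqe]; exact hpq'
      have hb0 : b = 0 := by
        rcases lt_trichotomy b 0 with h | h | h
        · have hble : b ≤ -1 := by omega
          nlinarith [hp'e, hp0', hq]
        · exact h
        · have hble : 1 ≤ b := by omega
          nlinarith [hp'e, hplt, hpq, hp0]
      rw [hb0] at hp'e; simpa using hp'e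
    · -- swap : (1,0) = α•(ap+bq, cp+dq), (p',q') = β•(a,c)
      obtain ⟨g1, g2⟩ := hcase
      rw [Prod.ext_iff] at g1 g2
      simp only [Prod.smul_fst, Prod.smul_snd, smul_eq_mul] at g1 g2
      obtain ⟨e1, e2⟩ := g1
      obtain ⟨e3, e4⟩ := g2
      -- e1 : 1 = α*(ap+bq), e2 : 0 = α*(cp+dq), e3 : p' = β*a, e4 : q' = β*c
      have hcpd0 : c * p + d * q = 0 := by
        have : ((c*p+d*q : ℤ) : ℝ) = 0 := by
          rcases mul_eq_zero.1 e2.symm with h | h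
          · exact absurd h (ne_of_gt hα)
          · exact h
        exact_mod_cast this
      have hm1 : 1 ≤ a * p + b * q := by
        by_contra hcon
        push_neg at hcon
        have hle : a * p + b * q ≤ 0 := by omega
        have : ((a*p+b*q : ℤ) : ℝ) ≤ 0 := by exact_mod_cast hle
        nlinarith
      have hq'R : (0:ℝ) < (q':ℝ) := by exact_mod_cast hq'
      have hcpos : 0 < c := by
        by_contra hcon
        push_neg at hcon
        have : (c:ℝ) ≤ 0 := by exact_mod_cast hcon
        nlinarith
      have hqc : q ∣ c := by
        have hd1 : q ∣ c * p := ⟨-d, by linarith [hcpd0]⟩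
        exact hcopq.symm.dvd_of_dvd_mul_right hd1
      obtain ⟨k, hk⟩ := hqc
      have hkpos : 0 < k := by nlinarith
      have hdkp : d = -(k * p) := by
        have h0 : q * (k * p + d) = 0 := by rw [hk] at hcpd0; linarith [hcpd0]
        rcases mul_eq_zero.1 h0 with h | h
        · omega
        · linarith
      have hdet3 : -(k * (a * p + b * q)) = 1 ∨ -(k * (a * p + b * q)) = -1 := by
        rcases hdet2 with h | h <;> [left; right] <;>
          · rw [hk, hdkp] at h; linear_combination h
      have hk1' : k = 1 := by
        rcases hdet3 with h | h
        · exfalso; nlinarith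
        · have hkm : k * (a * p + b * q) = 1 := by linarith
          exact Int.eq_one_of_dvd_one (le_of_lt hkpos) ⟨a * p + b * q, hkm.symm⟩
      have hm1' : a * p + b * q = 1 := by
        rcases hdet3 with h | h
        · exfalso; nlinarith
        · rw [hk1'] at h; linarith
      have hcq : c = q := by rw [hk, hk1', mul_one]
      rw [hcq] at e4
      have hkey : (p' : ℝ) * q = (q' : ℝ) * a := by rw [e3, e4]; ring
      have hkeyZ : p' * q = q' * a := by exact_mod_cast hkey
      have hcopaq : IsCoprime a q := ⟨p, b, by linarith [hm1']⟩
      have hq'q : q' ∣ q := by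
        refine hcopq'.symm.dvd_of_dvd_mul_left ⟨a, ?_⟩
        linarith [hkeyZ]
      have hqq' : q ∣ q' := by
        refine (hcopaq.symm).dvd_of_dvd_mul_right ⟨p', ?_⟩
        rw [mul_comm q' a] at hkeyZ
        linarith [hkeyZ]
      have hqe : q' = q := Int.dvd_antisymm (le_of_lt hq') (le_of_lt hq) hq'q hqq'
      refine ⟨hqe, Or.inr ?_⟩
      rw [hqe] at hkeyZ
      have hp'a : p' = a := by
        have hq0 : q ≠ 0 := ne_of_gt hq
        exact mul_right_cancel₀ hq0 (by linarith [hkeyZ] : p' * q = a * q)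
      rw [hp'a]
      have : q ∣ 1 - p * a := ⟨b, by linarith [hm1']⟩
      exact (Int.modEq_iff_dvd.2 this)
  · rintro ⟨hqe, hcase | hmod⟩
    · rw [hqe, hcase]
      refine ⟨!![1, 0; 0, 1], Or.inl (by rw [Matrix.det_fin_two_of]; ring), ?_⟩
      have : mulMap !![1, 0; 0, 1] = id := by funext x; simp [mulMap]
      rw [this, Set.image_id]
    · rw [hqe]
      obtain ⟨k, hk⟩ : q ∣ 1 - p * p' := Int.ModEq.dvd hmod
      refine ⟨!![p', k; q, -p], Or.inr (by rw [Matrix.det_fin_two_of]; linear_combination hk), ?_⟩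
      rw [image_cone2]
      have h1 : mulMap !![p', k; q, -p] ((1:ℝ), (0:ℝ)) = ((p':ℝ), (q:ℝ)) := by
        simp [mulMap]
      have h2 : mulMap !![p', k; q, -p] ((p:ℝ), (q:ℝ)) = ((1:ℝ), (0:ℝ)) := by
        have hc : (1:ℝ) - (p:ℝ) * (p':ℝ) = (q:ℝ) * (k:ℝ) := by exact_mod_cast hk
        simp only [mulMap]
        rw [Prod.ext_iff]
        simp only [Matrix.cons_val', Matrix.cons_val_zero, Matrix.cons_val_one,
          Matrix.head_cons, Matrix.empty_val', Matrix.cons_val_fin_one, Matrix.of_apply,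
          Matrix.head_fin_const]
        push_cast
        constructor
        · linarith
        · ring
      rw [h1, h2, cone2_comm]
end

section
/- For every integer p ≥ 1 and every k ∈ {1,2,3}: the area of Q_p^[k] equals (p+k)/2 + 1; the number of lattice points of ℤ² on the boundary ∂Q_p^[k] equals k+2 if p is even and k+3 if p is odd; and the number of lattice points of ℤ² in the interior of Q_p^[k] equals p/2 + 1 if p is even and (p−1)/2 + 1 if p is odd. -/
open Set MeasureTheory

/-- Q_p^[1] := conv({(1,−1),(p,1),(−1,0)}). -/
def Qpoly1 (p : ℤ) : Set (ℝ × ℝ) :=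
  convexHull ℝ ({(1, -1), ((p : ℝ), 1), (-1, 0)} : Set (ℝ × ℝ))

/-- Q_p^[2] := conv({(1,−1),(p,1),(p−1,1),(−1,0)}). -/
def Qpoly2 (p : ℤ) : Set (ℝ × ℝ) :=
  convexHull ℝ ({(1, -1), ((p : ℝ), 1), ((p : ℝ) - 1, 1), (-1, 0)} : Set (ℝ × ℝ))

/-- Q_p^[3] := conv({(1,−1),(p,1),(p−1,1),(−1,0),(0,−1)}). -/
def Qpoly3 (p : ℤ) : Set (ℝ × ℝ) :=
  convexHull ℝ ({(1, -1), ((p : ℝ), 1), ((p : ℝ) - 1, 1), (-1, 0), (0, -1)} : Set (ℝ × ℝ))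

/-- Q_p^[k] for k ∈ {1,2,3}. -/
def Qpoly (p : ℤ) (k : ℕ) : Set (ℝ × ℝ) :=
  if k = 1 then Qpoly1 p else if k = 2 then Qpoly2 p else Qpoly3 p

/-- The lattice ℤ² viewed inside ℝ². -/
def latticePts : Set (ℝ × ℝ) := {x | ∃ m n : ℤ, x = ((m : ℝ), (n : ℝ))}

lemma isOpen_shp (a b c : ℝ) : IsOpen {z : ℝ × ℝ | a * z.1 + b * z.2 < c} :=
  isOpen_lt (by fun_prop) continuous_const

lemma isClosed_hp (a b c : ℝ) : IsClosed {z : ℝ × ℝ | a * z.1 + b * z.2 ≤ c} :=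
  isClosed_le (by fun_prop) continuous_const

lemma interior_hp (a b c : ℝ) (hab : a ≠ 0 ∨ b ≠ 0) :
    interior {z : ℝ × ℝ | a * z.1 + b * z.2 ≤ c} = {z | a * z.1 + b * z.2 < c} := by
  apply Subset.antisymm
  · intro z hz
    by_contra hlt
    have hle : a * z.1 + b * z.2 ≤ c := by have := interior_subset hz; simpa using this
    have heq : a * z.1 + b * z.2 = c := le_antisymm hle (not_lt.mp hlt)
    obtain ⟨ε, hε, hball⟩ := Metric.isOpen_iff.mp isOpen_interior z hz
    have habpos : 0 < |a| + |b| := by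
      rcases hab with h | h
      · have := abs_pos.mpr h; positivity
      · have := abs_pos.mpr h; positivity
    set δ := ε / (2 * (|a| + |b|)) with hδ
    have hδpos : 0 < δ := by positivity
    have hw : (z.1 + δ * a, z.2 + δ * b) ∈ Metric.ball z ε := by
      rw [Metric.mem_ball, Prod.dist_eq]
      have h1 : dist (z.1 + δ * a) z.1 ≤ δ * (|a| + |b|) := by
        rw [Real.dist_eq]
        have : |z.1 + δ * a - z.1| = δ * |a| := by
          rw [show z.1 + δ * a - z.1 = δ * a by ring, abs_mul, abs_of_pos hδpos]
        rw [this]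
        nlinarith [abs_nonneg a, abs_nonneg b]
      have h2 : dist (z.2 + δ * b) z.2 ≤ δ * (|a| + |b|) := by
        rw [Real.dist_eq]
        have : |z.2 + δ * b - z.2| = δ * |b| := by
          rw [show z.2 + δ * b - z.2 = δ * b by ring, abs_mul, abs_of_pos hδpos]
        rw [this]
        nlinarith [abs_nonneg a, abs_nonneg b]
      have : δ * (|a| + |b|) = ε / 2 := by
        rw [hδ, div_mul_eq_mul_div, div_eq_div_iff (by positivity) two_ne_zero]; ring
      rw [this] at h1 h2
      exact max_lt (lt_of_le_of_lt h1 (by linarith)) (lt_of_le_of_lt h2 (by linarith))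
    have := interior_subset (hball hw)
    simp only [mem_setOf_eq] at this
    have hab2 : 0 < a^2 + b^2 := by
      rcases hab with h | h
      · positivity
      · positivity
    nlinarith
  · exact interior_maximal (fun z hz => show a * z.1 + b * z.2 ≤ c from le_of_lt hz) (isOpen_shp a b c)




lemma convex_hp (a b c : ℝ) : Convex ℝ {z : ℝ × ℝ | a * z.1 + b * z.2 ≤ c} :=
  convex_halfSpace_le ⟨fun x y => by simp; ring, fun t x => by simp; ring⟩ c

lemma combo_mem {s : Set (ℝ × ℝ)} {A B C : ℝ × ℝ} (hA : A ∈ s) (hB : B ∈ s) (hC : C ∈ s)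
    {a b c : ℝ} (ha : 0 ≤ a) (hb : 0 ≤ b) (hc : 0 ≤ c) (habc : a + b + c = 1) :
    a • A + b • B + c • C ∈ convexHull ℝ s := by
  have h := (convex_convexHull ℝ s).sum_mem (t := (Finset.univ : Finset (Fin 3)))
    (w := ![a, b, c]) (z := ![A, B, C]) ?_ ?_ ?_
  · simpa [Fin.sum_univ_three] using h
  · intro i _; fin_cases i <;> assumption
  · simp [Fin.sum_univ_three, habc]
  · intro i _
    fin_cases i <;> simp <;> exact subset_convexHull ℝ s ‹_›

def S1 (p : ℤ) : Set (ℝ × ℝ) :=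
  {z | 2 * z.1 + (1 - (p:ℝ)) * z.2 ≤ (p:ℝ) + 1 ∧
       (-1) * z.1 + ((p:ℝ) + 1) * z.2 ≤ 1 ∧
       (-1) * z.1 + (-2) * z.2 ≤ 1}

def S2 (p : ℤ) : Set (ℝ × ℝ) :=
  {z | 2 * z.1 + (1 - (p:ℝ)) * z.2 ≤ (p:ℝ) + 1 ∧
       0 * z.1 + 1 * z.2 ≤ 1 ∧
       (-1) * z.1 + (p:ℝ) * z.2 ≤ 1 ∧
       (-1) * z.1 + (-2) * z.2 ≤ 1}

def S3 (p : ℤ) : Set (ℝ × ℝ) :=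
  {z | 2 * z.1 + (1 - (p:ℝ)) * z.2 ≤ (p:ℝ) + 1 ∧
       0 * z.1 + 1 * z.2 ≤ 1 ∧
       (-1) * z.1 + (p:ℝ) * z.2 ≤ 1 ∧
       (-1) * z.1 + (-1) * z.2 ≤ 1 ∧
       0 * z.1 + (-1) * z.2 ≤ 1}

lemma convex_S1 (p : ℤ) : Convex ℝ (S1 p) :=
  (convex_hp 2 (1 - (p:ℝ)) ((p:ℝ)+1)).inter
    (((convex_hp (-1) ((p:ℝ)+1) 1)).inter (convex_hp (-1) (-2) 1))

lemma convex_S2 (p : ℤ) : Convex ℝ (S2 p) :=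
  (convex_hp 2 (1 - (p:ℝ)) ((p:ℝ)+1)).inter
    ((convex_hp 0 1 1).inter (((convex_hp (-1) ((p:ℝ)) 1)).inter (convex_hp (-1) (-2) 1)))

lemma convex_S3 (p : ℤ) : Convex ℝ (S3 p) :=
  (convex_hp 2 (1 - (p:ℝ)) ((p:ℝ)+1)).inter
    ((convex_hp 0 1 1).inter (((convex_hp (-1) ((p:ℝ)) 1)).inter
      ((convex_hp (-1) (-1) 1).inter (convex_hp 0 (-1) 1))))

lemma Qpoly1_eq (p : ℤ) (hp : 1 ≤ p) : Qpoly1 p = S1 p := by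
  have hP : (1:ℝ) ≤ (p:ℝ) := by exact_mod_cast hp
  apply Subset.antisymm
  · apply convexHull_min _ (convex_S1 p)
    rintro z (rfl | rfl | rfl) <;>
      refine ⟨by simp <;> linarith, by simp <;> linarith, by simp <;> linarith⟩
  · rintro ⟨x, y⟩ ⟨h1, h2, h3⟩
    simp only at h1 h2 h3
    have hd : (0:ℝ) < (p:ℝ) + 3 := by linarith
    have key : ((x, y) : ℝ × ℝ) =
        ((x - ((p:ℝ)+1)*y + 1)/((p:ℝ)+3)) • ((1:ℝ), (-1:ℝ))
      + ((x + 2*y + 1)/((p:ℝ)+3)) • (((p:ℝ), (1:ℝ)))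
      + (((p:ℝ)+1 - 2*x + ((p:ℝ)-1)*y)/((p:ℝ)+3)) • ((-1:ℝ), (0:ℝ)) := by
      simp only [Prod.smul_mk, Prod.mk_add_mk, Prod.mk.injEq, smul_eq_mul]
      constructor <;> (field_simp; ring)
    rw [key]
    exact combo_mem (by simp) (by simp) (by simp)
      (div_nonneg (by linarith) hd.le) (div_nonneg (by linarith) hd.le)
      (div_nonneg (by linarith) hd.le) (by field_simp; ring)

lemma Qpoly2_eq (p : ℤ) (hp : 1 ≤ p) : Qpoly2 p = S2 p := by
  have hP : (1:ℝ) ≤ (p:ℝ) := by exact_mod_cast hp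
  apply Subset.antisymm
  · apply convexHull_min _ (convex_S2 p)
    rintro z (rfl | rfl | rfl | rfl) <;>
      refine ⟨by simp <;> linarith, by simp <;> linarith, by simp <;> linarith, by simp <;> linarith⟩
  · rintro ⟨x, y⟩ ⟨h1, h2, h3, h4⟩
    simp only at h1 h2 h3 h4
    have hd : (0:ℝ) < (p:ℝ) + 3 := by linarith
    rcases le_total 0 (x - ((p:ℝ)+1)*y + 1) with hcase | hcase
    · have key : ((x, y) : ℝ × ℝ) =
          ((x - ((p:ℝ)+1)*y + 1)/((p:ℝ)+3)) • ((1:ℝ), (-1:ℝ))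
        + ((x + 2*y + 1)/((p:ℝ)+3)) • (((p:ℝ), (1:ℝ)))
        + (((p:ℝ)+1 - 2*x + ((p:ℝ)-1)*y)/((p:ℝ)+3)) • ((-1:ℝ), (0:ℝ)) := by
        simp only [Prod.smul_mk, Prod.mk_add_mk, Prod.mk.injEq, smul_eq_mul]
        constructor <;> (field_simp; ring)
      rw [key]
      exact combo_mem (by simp) (by simp) (by simp)
        (div_nonneg (by linarith) hd.le) (div_nonneg (by linarith) hd.le)
        (div_nonneg (by linarith) hd.le) (by field_simp; ring)
    · have key : ((x, y) : ℝ × ℝ) =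
          (-(x - ((p:ℝ)+1)*y + 1)) • (((p:ℝ) - 1, (1:ℝ)))
        + ((x - (p:ℝ)*y + 1)) • (((p:ℝ), (1:ℝ)))
        + ((1 - y)) • ((-1:ℝ), (0:ℝ)) := by
        simp only [Prod.smul_mk, Prod.mk_add_mk, Prod.mk.injEq, smul_eq_mul]
        constructor <;> ring
      rw [key]
      exact combo_mem (by simp) (by simp) (by simp)
        (by linarith) (by linarith) (by linarith) (by ring)

lemma Qpoly3_eq (p : ℤ) (hp : 1 ≤ p) : Qpoly3 p = S3 p := by
  have hP : (1:ℝ) ≤ (p:ℝ) := by exact_mod_cast hp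
  apply Subset.antisymm
  · apply convexHull_min _ (convex_S3 p)
    rintro z (rfl | rfl | rfl | rfl | rfl) <;>
      refine ⟨by simp <;> linarith, by simp <;> linarith, by simp <;> linarith, by simp <;> linarith,
        by simp <;> linarith⟩
  · rintro ⟨x, y⟩ ⟨h1, h2, h3, h4, h5⟩
    simp only at h1 h2 h3 h4 h5
    have hd : (0:ℝ) < (p:ℝ) + 3 := by linarith
    rcases le_total 0 (x + 2*y + 1) with hc2 | hc2
    · rcases le_total 0 (x - ((p:ℝ)+1)*y + 1) with hcase | hcase
      · have key : ((x, y) : ℝ × ℝ) =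
            ((x - ((p:ℝ)+1)*y + 1)/((p:ℝ)+3)) • ((1:ℝ), (-1:ℝ))
          + ((x + 2*y + 1)/((p:ℝ)+3)) • (((p:ℝ), (1:ℝ)))
          + (((p:ℝ)+1 - 2*x + ((p:ℝ)-1)*y)/((p:ℝ)+3)) • ((-1:ℝ), (0:ℝ)) := by
          simp only [Prod.smul_mk, Prod.mk_add_mk, Prod.mk.injEq, smul_eq_mul]
          constructor <;> (field_simp; ring)
        rw [key]
        exact combo_mem (by simp) (by simp) (by simp)
          (div_nonneg (by linarith) hd.le) (div_nonneg (by linarith) hd.le)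
          (div_nonneg (by linarith) hd.le) (by field_simp; ring)
      · have key : ((x, y) : ℝ × ℝ) =
            (-(x - ((p:ℝ)+1)*y + 1)) • (((p:ℝ) - 1, (1:ℝ)))
          + ((x - (p:ℝ)*y + 1)) • (((p:ℝ), (1:ℝ)))
          + ((1 - y)) • ((-1:ℝ), (0:ℝ)) := by
          simp only [Prod.smul_mk, Prod.mk_add_mk, Prod.mk.injEq, smul_eq_mul]
          constructor <;> ring
        rw [key]
        exact combo_mem (by simp) (by simp) (by simp)
          (by linarith) (by linarith) (by linarith) (by ring)
    · have key : ((x, y) : ℝ × ℝ) =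
          ((x + y + 1)) • ((1:ℝ), (-1:ℝ))
        + ((y + 1)) • ((-1:ℝ), (0:ℝ))
        + ((-(x + 2*y + 1))) • ((0:ℝ), (-1:ℝ)) := by
        simp only [Prod.smul_mk, Prod.mk_add_mk, Prod.mk.injEq, smul_eq_mul]
        constructor <;> ring
      rw [key]
      exact combo_mem (by simp) (by simp) (by simp)
        (by linarith) (by linarith) (by linarith) (by ring)

lemma isClosed_S1 (p : ℤ) : IsClosed (S1 p) :=
  (isClosed_hp 2 (1 - (p:ℝ)) ((p:ℝ)+1)).inter
    ((isClosed_hp (-1) ((p:ℝ)+1) 1).inter (isClosed_hp (-1) (-2) 1))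

lemma isClosed_S2 (p : ℤ) : IsClosed (S2 p) :=
  (isClosed_hp 2 (1 - (p:ℝ)) ((p:ℝ)+1)).inter
    ((isClosed_hp 0 1 1).inter ((isClosed_hp (-1) ((p:ℝ)) 1).inter (isClosed_hp (-1) (-2) 1)))

lemma isClosed_S3 (p : ℤ) : IsClosed (S3 p) :=
  (isClosed_hp 2 (1 - (p:ℝ)) ((p:ℝ)+1)).inter
    ((isClosed_hp 0 1 1).inter ((isClosed_hp (-1) ((p:ℝ)) 1).inter
      ((isClosed_hp (-1) (-1) 1).inter (isClosed_hp 0 (-1) 1))))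

lemma interior_S1 (p : ℤ) : interior (S1 p) =
    {z : ℝ × ℝ | 2 * z.1 + (1 - (p:ℝ)) * z.2 < (p:ℝ) + 1 ∧
       (-1) * z.1 + ((p:ℝ) + 1) * z.2 < 1 ∧
       (-1) * z.1 + (-2) * z.2 < 1} := by
  apply Subset.antisymm
  · intro z hz
    refine ⟨?_, ?_, ?_⟩
    · have h := interior_mono (show S1 p ⊆ {z : ℝ × ℝ | 2 * z.1 + (1 - (p:ℝ)) * z.2 ≤ (p:ℝ) + 1} from fun w hw => hw.1) hz
      rwa [interior_hp _ _ _ (Or.inl two_ne_zero)] at h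
    · have h := interior_mono (show S1 p ⊆ {z : ℝ × ℝ | (-1) * z.1 + ((p:ℝ) + 1) * z.2 ≤ 1} from fun w hw => hw.2.1) hz
      rwa [interior_hp _ _ _ (Or.inl (by norm_num))] at h
    · have h := interior_mono (show S1 p ⊆ {z : ℝ × ℝ | (-1) * z.1 + (-2) * z.2 ≤ 1} from fun w hw => hw.2.2) hz
      rwa [interior_hp _ _ _ (Or.inl (by norm_num))] at h
  · exact interior_maximal
      (fun z hz => ⟨hz.1.le, hz.2.1.le, hz.2.2.le⟩)
      ((isOpen_shp 2 (1 - (p:ℝ)) ((p:ℝ)+1)).inter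
        ((isOpen_shp (-1) ((p:ℝ)+1) 1).inter (isOpen_shp (-1) (-2) 1)))

lemma interior_S2 (p : ℤ) : interior (S2 p) =
    {z : ℝ × ℝ | 2 * z.1 + (1 - (p:ℝ)) * z.2 < (p:ℝ) + 1 ∧
       0 * z.1 + 1 * z.2 < 1 ∧
       (-1) * z.1 + (p:ℝ) * z.2 < 1 ∧
       (-1) * z.1 + (-2) * z.2 < 1} := by
  apply Subset.antisymm
  · intro z hz
    refine ⟨?_, ?_, ?_, ?_⟩
    · have h := interior_mono (show S2 p ⊆ {z : ℝ × ℝ | 2 * z.1 + (1 - (p:ℝ)) * z.2 ≤ (p:ℝ) + 1} from fun w hw => hw.1) hz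
      rwa [interior_hp _ _ _ (Or.inl two_ne_zero)] at h
    · have h := interior_mono (show S2 p ⊆ {z : ℝ × ℝ | 0 * z.1 + 1 * z.2 ≤ 1} from fun w hw => hw.2.1) hz
      rwa [interior_hp _ _ _ (Or.inr one_ne_zero)] at h
    · have h := interior_mono (show S2 p ⊆ {z : ℝ × ℝ | (-1) * z.1 + (p:ℝ) * z.2 ≤ 1} from fun w hw => hw.2.2.1) hz
      rwa [interior_hp _ _ _ (Or.inl (by norm_num))] at h
    · have h := interior_mono (show S2 p ⊆ {z : ℝ × ℝ | (-1) * z.1 + (-2) * z.2 ≤ 1} from fun w hw => hw.2.2.2) hz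
      rwa [interior_hp _ _ _ (Or.inl (by norm_num))] at h
  · exact interior_maximal
      (fun z hz => ⟨hz.1.le, hz.2.1.le, hz.2.2.1.le, hz.2.2.2.le⟩)
      ((isOpen_shp 2 (1 - (p:ℝ)) ((p:ℝ)+1)).inter
        ((isOpen_shp 0 1 1).inter ((isOpen_shp (-1) ((p:ℝ)) 1).inter (isOpen_shp (-1) (-2) 1))))

lemma interior_S3 (p : ℤ) : interior (S3 p) =
    {z : ℝ × ℝ | 2 * z.1 + (1 - (p:ℝ)) * z.2 < (p:ℝ) + 1 ∧
       0 * z.1 + 1 * z.2 < 1 ∧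
       (-1) * z.1 + (p:ℝ) * z.2 < 1 ∧
       (-1) * z.1 + (-1) * z.2 < 1 ∧
       0 * z.1 + (-1) * z.2 < 1} := by
  apply Subset.antisymm
  · intro z hz
    refine ⟨?_, ?_, ?_, ?_, ?_⟩
    · have h := interior_mono (show S3 p ⊆ {z : ℝ × ℝ | 2 * z.1 + (1 - (p:ℝ)) * z.2 ≤ (p:ℝ) + 1} from fun w hw => hw.1) hz
      rwa [interior_hp _ _ _ (Or.inl two_ne_zero)] at h
    · have h := interior_mono (show S3 p ⊆ {z : ℝ × ℝ | 0 * z.1 + 1 * z.2 ≤ 1} from fun w hw => hw.2.1) hz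
      rwa [interior_hp _ _ _ (Or.inr one_ne_zero)] at h
    · have h := interior_mono (show S3 p ⊆ {z : ℝ × ℝ | (-1) * z.1 + (p:ℝ) * z.2 ≤ 1} from fun w hw => hw.2.2.1) hz
      rwa [interior_hp _ _ _ (Or.inl (by norm_num))] at h
    · have h := interior_mono (show S3 p ⊆ {z : ℝ × ℝ | (-1) * z.1 + (-1) * z.2 ≤ 1} from fun w hw => hw.2.2.2.1) hz
      rwa [interior_hp _ _ _ (Or.inl (by norm_num))] at h
    · have h := interior_mono (show S3 p ⊆ {z : ℝ × ℝ | 0 * z.1 + (-1) * z.2 ≤ 1} from fun w hw => hw.2.2.2.2) hz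
      rwa [interior_hp _ _ _ (Or.inr (by norm_num))] at h
  · exact interior_maximal
      (fun z hz => ⟨hz.1.le, hz.2.1.le, hz.2.2.1.le, hz.2.2.2.1.le, hz.2.2.2.2.le⟩)
      ((isOpen_shp 2 (1 - (p:ℝ)) ((p:ℝ)+1)).inter
        ((isOpen_shp 0 1 1).inter ((isOpen_shp (-1) ((p:ℝ)) 1).inter
          ((isOpen_shp (-1) (-1) 1).inter (isOpen_shp 0 (-1) 1)))))

lemma interior_lattice1 (p : ℤ) (hp : 1 ≤ p) :
    interior (S1 p) ∩ latticePts = (fun m : ℤ => ((m:ℝ), (0:ℝ))) '' {m : ℤ | 0 ≤ m ∧ 2*m ≤ p} := by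
  have hP : (1:ℝ) ≤ (p:ℝ) := by exact_mod_cast hp
  rw [interior_S1]
  ext z
  constructor
  · rintro ⟨hz, m, n, rfl⟩
    obtain ⟨h1, h2, h3⟩ := hz
    have h1' : 2*(m:ℝ) + (1-(p:ℝ))*(n:ℝ) < (p:ℝ)+1 := h1
    have h2' : (-1)*(m:ℝ) + ((p:ℝ)+1)*(n:ℝ) < 1 := h2
    have h3' : (-1)*(m:ℝ) + (-2)*(n:ℝ) < 1 := h3
    have H1 : 2*m + (1-p)*n < p+1 := by exact_mod_cast h1'
    have H2 : (-1)*m + (p+1)*n < 1 := by exact_mod_cast h2'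
    have H3 : (-1)*m + (-2)*n < 1 := by exact_mod_cast h3'
    have hn1 : n ≤ 0 := by
      by_contra hcon
      push_neg at hcon
      nlinarith [mul_nonneg (by linarith : (0:ℤ) ≤ p+3) (by linarith : (0:ℤ) ≤ n-1)]
    have hn2 : 0 ≤ n := by
      by_contra hcon
      push_neg at hcon
      nlinarith [mul_nonneg (by linarith : (0:ℤ) ≤ p+3) (by linarith : (0:ℤ) ≤ -n-1)]
    have hn0 : n = 0 := le_antisymm hn1 hn2
    subst hn0
    exact ⟨m, ⟨by omega, by omega⟩, by norm_num⟩
  · rintro ⟨m, ⟨hm0, hm2⟩, rfl⟩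
    have hm0' : (0:ℝ) ≤ (m:ℝ) := by exact_mod_cast hm0
    have hm2' : 2*(m:ℝ) ≤ (p:ℝ) := by exact_mod_cast hm2
    exact ⟨⟨by simp; linarith, by simp; linarith, by simp; linarith⟩, m, 0, by norm_num⟩

lemma interior_lattice2 (p : ℤ) (hp : 1 ≤ p) :
    interior (S2 p) ∩ latticePts = (fun m : ℤ => ((m:ℝ), (0:ℝ))) '' {m : ℤ | 0 ≤ m ∧ 2*m ≤ p} := by
  have hP : (1:ℝ) ≤ (p:ℝ) := by exact_mod_cast hp
  rw [interior_S2]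
  ext z
  constructor
  · rintro ⟨hz, m, n, rfl⟩
    obtain ⟨h1, h2, h3, h4⟩ := hz
    have h1' : 2*(m:ℝ) + (1-(p:ℝ))*(n:ℝ) < (p:ℝ)+1 := h1
    have h2' : 0*(m:ℝ) + 1*(n:ℝ) < 1 := h2
    have h3' : (-1)*(m:ℝ) + (p:ℝ)*(n:ℝ) < 1 := h3
    have h4' : (-1)*(m:ℝ) + (-2)*(n:ℝ) < 1 := h4
    have H1 : 2*m + (1-p)*n < p+1 := by exact_mod_cast h1'
    have H2 : 0*m + 1*n < 1 := by exact_mod_cast h2'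
    have H3 : (-1)*m + p*n < 1 := by exact_mod_cast h3'
    have H4 : (-1)*m + (-2)*n < 1 := by exact_mod_cast h4'
    have hn1 : n ≤ 0 := by omega
    have hn2 : 0 ≤ n := by
      by_contra hcon
      push_neg at hcon
      nlinarith [mul_nonneg (by linarith : (0:ℤ) ≤ p+3) (by linarith : (0:ℤ) ≤ -n-1)]
    have hn0 : n = 0 := le_antisymm hn1 hn2
    subst hn0
    exact ⟨m, ⟨by omega, by omega⟩, by norm_num⟩
  · rintro ⟨m, ⟨hm0, hm2⟩, rfl⟩
    have hm0' : (0:ℝ) ≤ (m:ℝ) := by exact_mod_cast hm0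
    have hm2' : 2*(m:ℝ) ≤ (p:ℝ) := by exact_mod_cast hm2
    exact ⟨⟨by simp; linarith, by simp, by simp; linarith, by simp; linarith⟩, m, 0, by norm_num⟩

lemma interior_lattice3 (p : ℤ) (hp : 1 ≤ p) :
    interior (S3 p) ∩ latticePts = (fun m : ℤ => ((m:ℝ), (0:ℝ))) '' {m : ℤ | 0 ≤ m ∧ 2*m ≤ p} := by
  have hP : (1:ℝ) ≤ (p:ℝ) := by exact_mod_cast hp
  rw [interior_S3]
  ext z
  constructor
  · rintro ⟨hz, m, n, rfl⟩
    obtain ⟨h1, h2, h3, h4, h5⟩ := hz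
    have h1' : 2*(m:ℝ) + (1-(p:ℝ))*(n:ℝ) < (p:ℝ)+1 := h1
    have h2' : 0*(m:ℝ) + 1*(n:ℝ) < 1 := h2
    have h3' : (-1)*(m:ℝ) + (p:ℝ)*(n:ℝ) < 1 := h3
    have h4' : (-1)*(m:ℝ) + (-1)*(n:ℝ) < 1 := h4
    have h5' : 0*(m:ℝ) + (-1)*(n:ℝ) < 1 := h5
    have H1 : 2*m + (1-p)*n < p+1 := by exact_mod_cast h1'
    have H2 : 0*m + 1*n < 1 := by exact_mod_cast h2'
    have H3 : (-1)*m + p*n < 1 := by exact_mod_cast h3'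
    have H4 : (-1)*m + (-1)*n < 1 := by exact_mod_cast h4'
    have H5 : 0*m + (-1)*n < 1 := by exact_mod_cast h5'
    have hn0 : n = 0 := by omega
    subst hn0
    exact ⟨m, ⟨by omega, by omega⟩, by norm_num⟩
  · rintro ⟨m, ⟨hm0, hm2⟩, rfl⟩
    have hm0' : (0:ℝ) ≤ (m:ℝ) := by exact_mod_cast hm0
    have hm2' : 2*(m:ℝ) ≤ (p:ℝ) := by exact_mod_cast hm2
    exact ⟨⟨by simp; linarith, by simp, by simp; linarith, by simp; linarith, by simp⟩,
      m, 0, by norm_num⟩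

lemma ncard_interior_lattice (p : ℤ) (hp : 1 ≤ p) :
    ((fun m : ℤ => ((m:ℝ), (0:ℝ))) '' {m : ℤ | 0 ≤ m ∧ 2*m ≤ p}).ncard = (p/2 + 1).toNat := by
  have hinj : Function.Injective (fun m : ℤ => ((m:ℝ), (0:ℝ))) := by
    intro a b hab
    simp only [Prod.mk.injEq] at hab
    exact_mod_cast hab.1
  rw [Set.ncard_image_of_injective _ hinj]
  have : {m : ℤ | 0 ≤ m ∧ 2*m ≤ p} = Set.Icc 0 (p/2) := by
    ext m; simp only [Set.mem_setOf_eq, Set.mem_Icc]; omega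
  rw [this, ← Finset.coe_Icc, Set.ncard_coe_finset, Int.card_Icc]
  congr 1
  omega
lemma frontier_lattice1 (p : ℤ) (hp : 1 ≤ p) :
    frontier (S1 p) ∩ latticePts =
      (if Even p then {((1:ℝ), (-1:ℝ)), ((p:ℝ), 1), ((-1:ℝ), (0:ℝ))}
       else {(((p:ℝ)+1)/2, (0:ℝ)), ((1:ℝ), (-1:ℝ)), ((p:ℝ), 1), ((-1:ℝ), (0:ℝ))}) := by
  have hP : (1:ℝ) ≤ (p:ℝ) := by exact_mod_cast hp
  rw [(isClosed_S1 p).frontier_eq, interior_S1]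
  ext z
  constructor
  · rintro ⟨⟨hS, hni⟩, m, n, rfl⟩
    obtain ⟨h1, h2, h3⟩ := hS
    have h1' : 2*(m:ℝ) + (1-(p:ℝ))*(n:ℝ) ≤ (p:ℝ)+1 := h1
    have h2' : (-1)*(m:ℝ) + ((p:ℝ)+1)*(n:ℝ) ≤ 1 := h2
    have h3' : (-1)*(m:ℝ) + (-2)*(n:ℝ) ≤ 1 := h3
    have H1 : 2*m + (1-p)*n ≤ p+1 := by exact_mod_cast h1'
    have H2 : (-1)*m + (p+1)*n ≤ 1 := by exact_mod_cast h2'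
    have H3 : (-1)*m + (-2)*n ≤ 1 := by exact_mod_cast h3'
    have key : 2*m + (1-p)*n = p+1 ∨ (-1)*m + (p+1)*n = 1 ∨ (-1)*m + (-2)*n = 1 := by
      by_contra hcon
      push_neg at hcon
      obtain ⟨e1, e2, e3⟩ := hcon
      exact hni ⟨show 2*(m:ℝ) + (1-(p:ℝ))*(n:ℝ) < (p:ℝ)+1 by exact_mod_cast H1.lt_of_ne e1,
        show (-1)*(m:ℝ) + ((p:ℝ)+1)*(n:ℝ) < 1 by exact_mod_cast H2.lt_of_ne e2,
        show (-1)*(m:ℝ) + (-2)*(n:ℝ) < 1 by exact_mod_cast H3.lt_of_ne e3⟩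
    have hn1 : n ≤ 1 := by
      by_contra hcon
      push_neg at hcon
      nlinarith [mul_nonneg (by linarith : (0:ℤ) ≤ p+3) (by linarith : (0:ℤ) ≤ n-2)]
    have hn2 : -1 ≤ n := by
      by_contra hcon
      push_neg at hcon
      nlinarith [mul_nonneg (by linarith : (0:ℤ) ≤ p+3) (by linarith : (0:ℤ) ≤ -n-2)]
    by_cases hev : Even p
    · rw [if_pos hev]
      obtain ⟨q, hq⟩ := hev
      have hmn : (m = 1 ∧ n = -1) ∨ (m = p ∧ n = 1) ∨ (m = -1 ∧ n = 0) := by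
        interval_cases n <;> omega
      rcases hmn with ⟨rfl, rfl⟩ | ⟨rfl, rfl⟩ | ⟨rfl, rfl⟩ <;> norm_num
    · rw [if_neg hev]
      rw [Int.not_even_iff_odd] at hev
      obtain ⟨q, hq⟩ := hev
      have hmn : (2*m = p + 1 ∧ n = 0) ∨ (m = 1 ∧ n = -1) ∨ (m = p ∧ n = 1) ∨
          (m = -1 ∧ n = 0) := by
        interval_cases n <;> omega
      rcases hmn with ⟨hm, rfl⟩ | ⟨rfl, rfl⟩ | ⟨rfl, rfl⟩ | ⟨rfl, rfl⟩
      · have : (m:ℝ) = ((p:ℝ)+1)/2 := by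
          have : 2*(m:ℝ) = (p:ℝ)+1 := by exact_mod_cast hm
          linarith
        left
        rw [Prod.mk.injEq]
        exact ⟨this, by norm_num⟩
      all_goals norm_num
  · intro hz
    have hmain : ∀ w : ℝ × ℝ, w ∈ ({((1:ℝ), (-1:ℝ)), ((p:ℝ), 1), ((-1:ℝ), (0:ℝ))} : Set (ℝ × ℝ))
        → w ∈ (S1 p \ {z : ℝ × ℝ | 2 * z.1 + (1 - (p:ℝ)) * z.2 < (p:ℝ) + 1 ∧
       (-1) * z.1 + ((p:ℝ) + 1) * z.2 < 1 ∧
       (-1) * z.1 + (-2) * z.2 < 1}) ∩ latticePts := by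
      rintro w (rfl | rfl | rfl)
      · exact ⟨⟨⟨by simp <;> linarith, by simp <;> linarith, by simp <;> linarith⟩,
          fun h => by obtain ⟨s1, s2, s3⟩ := h; norm_num at s1 s2 s3 <;> linarith⟩, 1, -1, by norm_num⟩
      · exact ⟨⟨⟨by simp <;> linarith, by simp <;> linarith, by simp <;> linarith⟩,
          fun h => by obtain ⟨s1, s2, s3⟩ := h; simp only at s1 s2 s3; linarith⟩, p, 1, by norm_num⟩
      · exact ⟨⟨⟨by simp <;> linarith, by simp <;> linarith, by simp <;> linarith⟩,
          fun h => by obtain ⟨s1, s2, s3⟩ := h; simp only at s1 s2 s3; linarith⟩, -1, 0, by norm_num⟩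
    by_cases hev : Even p
    · rw [if_pos hev] at hz
      exact hmain z hz
    · rw [if_neg hev] at hz
      rcases hz with rfl | hz
      · rw [Int.not_even_iff_odd] at hev
        obtain ⟨q, hq⟩ := hev
        have hq' : ((p:ℝ)+1)/2 = ((q+1 : ℤ) : ℝ) := by
          push_cast
          rw [hq]
          push_cast
          ring
        refine ⟨⟨⟨by simp <;> linarith, by simp <;> linarith, by simp <;> linarith⟩,
          fun h => by obtain ⟨s1, s2, s3⟩ := h; norm_num at s1 s2 s3 <;> linarith⟩, q+1, 0, by rw [Prod.mk.injEq]; exact ⟨hq', by norm_num⟩⟩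
      · exact hmain z hz
lemma frontier_lattice2 (p : ℤ) (hp : 1 ≤ p) :
    frontier (S2 p) ∩ latticePts =
      (if Even p then {((1:ℝ), (-1:ℝ)), ((p:ℝ), 1), ((p:ℝ)-1, 1), ((-1:ℝ), (0:ℝ))}
       else {(((p:ℝ)+1)/2, (0:ℝ)), ((1:ℝ), (-1:ℝ)), ((p:ℝ), 1), ((p:ℝ)-1, 1),
             ((-1:ℝ), (0:ℝ))}) := by
  have hP : (1:ℝ) ≤ (p:ℝ) := by exact_mod_cast hp
  rw [(isClosed_S2 p).frontier_eq, interior_S2]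
  ext z
  constructor
  · rintro ⟨⟨hS, hni⟩, m, n, rfl⟩
    obtain ⟨h1, h2, h3, h4⟩ := hS
    have h1' : 2*(m:ℝ) + (1-(p:ℝ))*(n:ℝ) ≤ (p:ℝ)+1 := h1
    have h2' : 0*(m:ℝ) + 1*(n:ℝ) ≤ 1 := h2
    have h3' : (-1)*(m:ℝ) + (p:ℝ)*(n:ℝ) ≤ 1 := h3
    have h4' : (-1)*(m:ℝ) + (-2)*(n:ℝ) ≤ 1 := h4
    have H1 : 2*m + (1-p)*n ≤ p+1 := by exact_mod_cast h1'
    have H2 : 0*m + 1*n ≤ 1 := by exact_mod_cast h2'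
    have H3 : (-1)*m + p*n ≤ 1 := by exact_mod_cast h3'
    have H4 : (-1)*m + (-2)*n ≤ 1 := by exact_mod_cast h4'
    have key : 2*m + (1-p)*n = p+1 ∨ 0*m + 1*n = 1 ∨ (-1)*m + p*n = 1 ∨
        (-1)*m + (-2)*n = 1 := by
      by_contra hcon
      push_neg at hcon
      obtain ⟨e1, e2, e3, e4⟩ := hcon
      exact hni ⟨show 2*(m:ℝ) + (1-(p:ℝ))*(n:ℝ) < (p:ℝ)+1 by exact_mod_cast H1.lt_of_ne e1,
        show 0*(m:ℝ) + 1*(n:ℝ) < 1 by exact_mod_cast H2.lt_of_ne e2,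
        show (-1)*(m:ℝ) + (p:ℝ)*(n:ℝ) < 1 by exact_mod_cast H3.lt_of_ne e3,
        show (-1)*(m:ℝ) + (-2)*(n:ℝ) < 1 by exact_mod_cast H4.lt_of_ne e4⟩
    have hn1 : n ≤ 1 := by omega
    have hn2 : -1 ≤ n := by
      by_contra hcon
      push_neg at hcon
      nlinarith [mul_nonneg (by linarith : (0:ℤ) ≤ p+3) (by linarith : (0:ℤ) ≤ -n-2)]
    by_cases hev : Even p
    · rw [if_pos hev]
      obtain ⟨q, hq⟩ := hev
      have hmn : (m = 1 ∧ n = -1) ∨ (m = p ∧ n = 1) ∨ (m = p - 1 ∧ n = 1) ∨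
          (m = -1 ∧ n = 0) := by
        interval_cases n <;> omega
      rcases hmn with ⟨rfl, rfl⟩ | ⟨rfl, rfl⟩ | ⟨rfl, rfl⟩ | ⟨rfl, rfl⟩
      · norm_num
      · norm_num
      · refine Or.inr (Or.inr (Or.inl ?_))
        rw [Prod.mk.injEq]
        constructor <;> push_cast <;> norm_num
      · norm_num
    · rw [if_neg hev]
      rw [Int.not_even_iff_odd] at hev
      obtain ⟨q, hq⟩ := hev
      have hmn : (2*m = p + 1 ∧ n = 0) ∨ (m = 1 ∧ n = -1) ∨ (m = p ∧ n = 1) ∨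
          (m = p - 1 ∧ n = 1) ∨ (m = -1 ∧ n = 0) := by
        interval_cases n <;> omega
      rcases hmn with ⟨hm, rfl⟩ | ⟨rfl, rfl⟩ | ⟨rfl, rfl⟩ | ⟨rfl, rfl⟩ | ⟨rfl, rfl⟩
      · have hmr : (m:ℝ) = ((p:ℝ)+1)/2 := by
          have : 2*(m:ℝ) = (p:ℝ)+1 := by exact_mod_cast hm
          linarith
        left
        rw [Prod.mk.injEq]
        exact ⟨hmr, by norm_num⟩
      · norm_num
      · norm_num
      · refine Or.inr (Or.inr (Or.inr (Or.inl ?_)))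
        rw [Prod.mk.injEq]
        constructor <;> push_cast <;> norm_num
      · norm_num
  · intro hz
    have hmain : ∀ w : ℝ × ℝ,
        w ∈ ({((1:ℝ), (-1:ℝ)), ((p:ℝ), 1), ((p:ℝ)-1, 1), ((-1:ℝ), (0:ℝ))} : Set (ℝ × ℝ))
        → w ∈ (S2 p \ {z : ℝ × ℝ | 2 * z.1 + (1 - (p:ℝ)) * z.2 < (p:ℝ) + 1 ∧
       0 * z.1 + 1 * z.2 < 1 ∧
       (-1) * z.1 + (p:ℝ) * z.2 < 1 ∧
       (-1) * z.1 + (-2) * z.2 < 1}) ∩ latticePts := by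
      rintro w (rfl | rfl | rfl | rfl)
      · exact ⟨⟨⟨by simp <;> linarith, by simp <;> linarith, by simp <;> linarith,
          by simp <;> linarith⟩,
          fun h => by obtain ⟨s1, s2, s3, s4⟩ := h; norm_num at s1 s2 s3 s4 <;> linarith⟩,
          1, -1, by norm_num⟩
      · exact ⟨⟨⟨by simp <;> linarith, by simp <;> linarith, by simp <;> linarith,
          by simp <;> linarith⟩,
          fun h => by obtain ⟨s1, s2, s3, s4⟩ := h; simp only at s1 s2 s3 s4; linarith⟩,
          p, 1, by norm_num⟩
      · exact ⟨⟨⟨by simp <;> linarith, by simp <;> linarith, by simp <;> linarith,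
          by simp <;> linarith⟩,
          fun h => by obtain ⟨s1, s2, s3, s4⟩ := h; simp only at s1 s2 s3 s4; linarith⟩,
          p - 1, 1, by push_cast; norm_num⟩
      · exact ⟨⟨⟨by simp <;> linarith, by simp <;> linarith, by simp <;> linarith,
          by simp <;> linarith⟩,
          fun h => by obtain ⟨s1, s2, s3, s4⟩ := h; simp only at s1 s2 s3 s4; linarith⟩,
          -1, 0, by norm_num⟩
    by_cases hev : Even p
    · rw [if_pos hev] at hz
      exact hmain z hz
    · rw [if_neg hev] at hz
      rcases hz with rfl | hz
      · rw [Int.not_even_iff_odd] at hev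
        obtain ⟨q, hq⟩ := hev
        have hq' : ((p:ℝ)+1)/2 = ((q+1 : ℤ) : ℝ) := by
          push_cast
          rw [hq]
          push_cast
          ring
        refine ⟨⟨⟨by simp <;> linarith, by simp <;> linarith, by simp <;> linarith,
          by simp <;> linarith⟩,
          fun h => by obtain ⟨s1, s2, s3, s4⟩ := h; norm_num at s1 s2 s3 s4 <;> linarith⟩,
          q+1, 0, by rw [Prod.mk.injEq]; exact ⟨hq', by norm_num⟩⟩
      · exact hmain z hz

lemma frontier_lattice3 (p : ℤ) (hp : 1 ≤ p) :
    frontier (S3 p) ∩ latticePts =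
      (if Even p then {((1:ℝ), (-1:ℝ)), ((p:ℝ), 1), ((p:ℝ)-1, 1), ((-1:ℝ), (0:ℝ)),
             ((0:ℝ), (-1:ℝ))}
       else {(((p:ℝ)+1)/2, (0:ℝ)), ((1:ℝ), (-1:ℝ)), ((p:ℝ), 1), ((p:ℝ)-1, 1),
             ((-1:ℝ), (0:ℝ)), ((0:ℝ), (-1:ℝ))}) := by
  have hP : (1:ℝ) ≤ (p:ℝ) := by exact_mod_cast hp
  rw [(isClosed_S3 p).frontier_eq, interior_S3]
  ext z
  constructor
  · rintro ⟨⟨hS, hni⟩, m, n, rfl⟩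
    obtain ⟨h1, h2, h3, h4, h5⟩ := hS
    have h1' : 2*(m:ℝ) + (1-(p:ℝ))*(n:ℝ) ≤ (p:ℝ)+1 := h1
    have h2' : 0*(m:ℝ) + 1*(n:ℝ) ≤ 1 := h2
    have h3' : (-1)*(m:ℝ) + (p:ℝ)*(n:ℝ) ≤ 1 := h3
    have h4' : (-1)*(m:ℝ) + (-1)*(n:ℝ) ≤ 1 := h4
    have h5' : 0*(m:ℝ) + (-1)*(n:ℝ) ≤ 1 := h5
    have H1 : 2*m + (1-p)*n ≤ p+1 := by exact_mod_cast h1'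
    have H2 : 0*m + 1*n ≤ 1 := by exact_mod_cast h2'
    have H3 : (-1)*m + p*n ≤ 1 := by exact_mod_cast h3'
    have H4 : (-1)*m + (-1)*n ≤ 1 := by exact_mod_cast h4'
    have H5 : 0*m + (-1)*n ≤ 1 := by exact_mod_cast h5'
    have key : 2*m + (1-p)*n = p+1 ∨ 0*m + 1*n = 1 ∨ (-1)*m + p*n = 1 ∨
        (-1)*m + (-1)*n = 1 ∨ 0*m + (-1)*n = 1 := by
      by_contra hcon
      push_neg at hcon
      obtain ⟨e1, e2, e3, e4, e5⟩ := hcon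
      exact hni ⟨show 2*(m:ℝ) + (1-(p:ℝ))*(n:ℝ) < (p:ℝ)+1 by exact_mod_cast H1.lt_of_ne e1,
        show 0*(m:ℝ) + 1*(n:ℝ) < 1 by exact_mod_cast H2.lt_of_ne e2,
        show (-1)*(m:ℝ) + (p:ℝ)*(n:ℝ) < 1 by exact_mod_cast H3.lt_of_ne e3,
        show (-1)*(m:ℝ) + (-1)*(n:ℝ) < 1 by exact_mod_cast H4.lt_of_ne e4,
        show 0*(m:ℝ) + (-1)*(n:ℝ) < 1 by exact_mod_cast H5.lt_of_ne e5⟩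
    have hn1 : n ≤ 1 := by omega
    have hn2 : -1 ≤ n := by omega
    by_cases hev : Even p
    · rw [if_pos hev]
      obtain ⟨q, hq⟩ := hev
      have hmn : (m = 1 ∧ n = -1) ∨ (m = 0 ∧ n = -1) ∨ (m = p ∧ n = 1) ∨
          (m = p - 1 ∧ n = 1) ∨ (m = -1 ∧ n = 0) := by
        interval_cases n <;> omega
      rcases hmn with ⟨rfl, rfl⟩ | ⟨rfl, rfl⟩ | ⟨rfl, rfl⟩ | ⟨rfl, rfl⟩ | ⟨rfl, rfl⟩
      · norm_num
      · norm_num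
      · norm_num
      · refine Or.inr (Or.inr (Or.inl ?_))
        rw [Prod.mk.injEq]
        constructor <;> push_cast <;> norm_num
      · norm_num
    · rw [if_neg hev]
      rw [Int.not_even_iff_odd] at hev
      obtain ⟨q, hq⟩ := hev
      have hmn : (2*m = p + 1 ∧ n = 0) ∨ (m = 1 ∧ n = -1) ∨ (m = 0 ∧ n = -1) ∨
          (m = p ∧ n = 1) ∨ (m = p - 1 ∧ n = 1) ∨ (m = -1 ∧ n = 0) := by
        interval_cases n <;> omega
      rcases hmn with ⟨hm, rfl⟩ | ⟨rfl, rfl⟩ | ⟨rfl, rfl⟩ | ⟨rfl, rfl⟩ | ⟨rfl, rfl⟩ | ⟨rfl, rfl⟩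
      · have hmr : (m:ℝ) = ((p:ℝ)+1)/2 := by
          have : 2*(m:ℝ) = (p:ℝ)+1 := by exact_mod_cast hm
          linarith
        left
        rw [Prod.mk.injEq]
        exact ⟨hmr, by norm_num⟩
      · norm_num
      · norm_num
      · norm_num
      · refine Or.inr (Or.inr (Or.inr (Or.inl ?_)))
        rw [Prod.mk.injEq]
        constructor <;> push_cast <;> norm_num
      · norm_num
  · intro hz
    have hmain : ∀ w : ℝ × ℝ,
        w ∈ ({((1:ℝ), (-1:ℝ)), ((p:ℝ), 1), ((p:ℝ)-1, 1), ((-1:ℝ), (0:ℝ)),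
             ((0:ℝ), (-1:ℝ))} : Set (ℝ × ℝ))
        → w ∈ (S3 p \ {z : ℝ × ℝ | 2 * z.1 + (1 - (p:ℝ)) * z.2 < (p:ℝ) + 1 ∧
       0 * z.1 + 1 * z.2 < 1 ∧
       (-1) * z.1 + (p:ℝ) * z.2 < 1 ∧
       (-1) * z.1 + (-1) * z.2 < 1 ∧
       0 * z.1 + (-1) * z.2 < 1}) ∩ latticePts := by
      rintro w (rfl | rfl | rfl | rfl | rfl)
      · exact ⟨⟨⟨by simp <;> linarith, by simp <;> linarith, by simp <;> linarith,
          by simp <;> linarith, by simp <;> linarith⟩,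
          fun h => by obtain ⟨s1, s2, s3, s4, s5⟩ := h; norm_num at s1 s2 s3 s4 s5 <;> linarith⟩,
          1, -1, by norm_num⟩
      · exact ⟨⟨⟨by simp <;> linarith, by simp <;> linarith, by simp <;> linarith,
          by simp <;> linarith, by simp <;> linarith⟩,
          fun h => by obtain ⟨s1, s2, s3, s4, s5⟩ := h; simp only at s1 s2 s3 s4 s5; linarith⟩,
          p, 1, by norm_num⟩
      · exact ⟨⟨⟨by simp <;> linarith, by simp <;> linarith, by simp <;> linarith,
          by simp <;> linarith, by simp <;> linarith⟩,
          fun h => by obtain ⟨s1, s2, s3, s4, s5⟩ := h; simp only at s1 s2 s3 s4 s5; linarith⟩,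
          p - 1, 1, by push_cast; norm_num⟩
      · exact ⟨⟨⟨by simp <;> linarith, by simp <;> linarith, by simp <;> linarith,
          by simp <;> linarith, by simp <;> linarith⟩,
          fun h => by obtain ⟨s1, s2, s3, s4, s5⟩ := h; simp only at s1 s2 s3 s4 s5; linarith⟩,
          -1, 0, by norm_num⟩
      · exact ⟨⟨⟨by simp <;> linarith, by simp <;> linarith, by simp <;> linarith,
          by simp <;> linarith, by simp <;> linarith⟩,
          fun h => by obtain ⟨s1, s2, s3, s4, s5⟩ := h; simp only at s1 s2 s3 s4 s5; linarith⟩,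
          0, -1, by norm_num⟩
    by_cases hev : Even p
    · rw [if_pos hev] at hz
      exact hmain z hz
    · rw [if_neg hev] at hz
      rcases hz with rfl | hz
      · rw [Int.not_even_iff_odd] at hev
        obtain ⟨q, hq⟩ := hev
        have hq' : ((p:ℝ)+1)/2 = ((q+1 : ℤ) : ℝ) := by
          push_cast
          rw [hq]
          push_cast
          ring
        refine ⟨⟨⟨by simp <;> linarith, by simp <;> linarith, by simp <;> linarith,
          by simp <;> linarith, by simp <;> linarith⟩,
          fun h => by obtain ⟨s1, s2, s3, s4, s5⟩ := h; norm_num at s1 s2 s3 s4 s5 <;> linarith⟩,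
          q+1, 0, by rw [Prod.mk.injEq]; exact ⟨hq', by norm_num⟩⟩
      · exact hmain z hz
lemma int_lin (a b c d : ℝ) : ∫ x in a..b, (c + d * x) = c*(b-a) + d*(b^2-a^2)/2 := by
  rw [intervalIntegral.integral_add (intervalIntegrable_const)
    (((by fun_prop : Continuous fun x : ℝ => d * x)).intervalIntegrable a b),
    intervalIntegral.integral_const, intervalIntegral.integral_const_mul]
  simp [integral_id]
  ring

lemma vol_eq_interior {s : Set (ℝ × ℝ)} (hconv : Convex ℝ s) :
    volume s = volume (interior s) := by
  have hfr : volume (frontier s) = 0 := hconv.addHaar_frontier volume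
  have hsub : s ⊆ interior s ∪ frontier s := by
    intro z hz
    by_cases h : z ∈ interior s
    · exact Or.inl h
    · exact Or.inr ⟨subset_closure hz, h⟩
  apply le_antisymm
  · refine le_trans (measure_mono hsub) (le_trans (measure_union_le _ _) ?_)
    rw [hfr, add_zero]
  · exact measure_mono interior_subset

lemma vol_region (L R : ℝ → ℝ) (hL : Continuous L) (hR : Continuous R)
    (hLR : ∀ y ∈ Ioo (-1:ℝ) 1, L y ≤ R y) :
    volume (Prod.swap ⁻¹' (regionBetween L R (Ioo (-1:ℝ) 1)))
      = ENNReal.ofReal (∫ y in Ioo (-1:ℝ) 1, (R - L) y) := by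
  have hmeas : MeasurableSet (regionBetween L R (Ioo (-1:ℝ) 1)) :=
    measurableSet_regionBetween hL.measurable hR.measurable measurableSet_Ioo
  rw [show (volume : Measure (ℝ × ℝ)) = (volume : Measure ℝ).prod volume from rfl,
    (Measure.measurePreserving_swap).measure_preimage hmeas.nullMeasurableSet]
  exact volume_regionBetween_eq_integral
    (hL.integrableOn_Icc.mono_set Ioo_subset_Icc_self)
    (hR.integrableOn_Icc.mono_set Ioo_subset_Icc_self)
    measurableSet_Ioo hLR

lemma vol_S1 (p : ℤ) (hp : 1 ≤ p) :
    volume (S1 p) = ENNReal.ofReal (((p:ℝ)+3)/2) := by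
  have hP : (1:ℝ) ≤ (p:ℝ) := by exact_mod_cast hp
  set L : ℝ → ℝ := fun y => max (-2*y - 1) (((p:ℝ)+1)*y - 1) with hLdef
  set R : ℝ → ℝ := fun y => ((p:ℝ)+1+((p:ℝ)-1)*y)/2 with hRdef
  have hL : Continuous L := Continuous.max (by fun_prop) (by fun_prop)
  have hR : Continuous R := by fun_prop
  have hset : interior (S1 p) = Prod.swap ⁻¹' (regionBetween L R (Ioo (-1:ℝ) 1)) := by
    rw [interior_S1]
    ext ⟨x, y⟩
    simp only [regionBetween, mem_setOf_eq, mem_preimage, Prod.swap_prod_mk, mem_Ioo,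
      hLdef, hRdef, max_lt_iff]
    constructor
    · rintro ⟨h1, h2, h3⟩
      have hy1 : y < 1 := by
        by_contra hcon
        push_neg at hcon
        nlinarith [mul_nonneg (show (0:ℝ) ≤ (p:ℝ)+3 by linarith) (show (0:ℝ) ≤ y - 1 by linarith)]
      have hy2 : -1 < y := by
        by_contra hcon
        push_neg at hcon
        nlinarith [mul_nonneg (show (0:ℝ) ≤ (p:ℝ)+3 by linarith) (show (0:ℝ) ≤ -y - 1 by linarith)]
      exact ⟨⟨hy2, hy1⟩, ⟨by linarith, by linarith⟩, by linarith⟩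
    · rintro ⟨⟨hy2, hy1⟩, ⟨hx1, hx2⟩, hx3⟩
      exact ⟨by linarith, by linarith, by linarith⟩
  have hLR : ∀ y ∈ Ioo (-1:ℝ) 1, L y ≤ R y := by
    rintro y ⟨hy1, hy2⟩
    rw [hLdef, hRdef]
    simp only [max_le_iff]
    constructor
    · nlinarith [mul_nonneg (show (0:ℝ) ≤ (p:ℝ)+3 by linarith) (show (0:ℝ) ≤ 1 + y by linarith)]
    · nlinarith [mul_nonneg (show (0:ℝ) ≤ (p:ℝ)+3 by linarith) (show (0:ℝ) ≤ 1 - y by linarith)]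
  rw [vol_eq_interior (by rw [← Qpoly1_eq p hp]; exact convex_convexHull ℝ _), hset,
    vol_region L R hL hR hLR]
  have hcont : Continuous (R - L) := hR.sub hL
  rw [← integral_Ioc_eq_integral_Ioo' (measure_singleton _),
    ← intervalIntegral.integral_of_le (by norm_num : (-1:ℝ) ≤ 1),
    ← intervalIntegral.integral_add_adjacent_intervals
      (hcont.intervalIntegrable (-1) 0) (hcont.intervalIntegrable 0 1)]
  have e1 : ∫ y in (-1:ℝ)..0, (R - L) y
      = ∫ y in (-1:ℝ)..0, (((p:ℝ)+3)/2 + ((p:ℝ)+3)/2 * y) := by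
    apply intervalIntegral.integral_congr
    intro y hy
    rw [uIcc_of_le (by norm_num : (-1:ℝ) ≤ 0), mem_Icc] at hy
    obtain ⟨hya, hyb⟩ := hy
    have hmax : ((p:ℝ)+1)*y - 1 ≤ -2*y - 1 := by
      nlinarith [mul_nonneg (show (0:ℝ) ≤ (p:ℝ)+3 by linarith) (show (0:ℝ) ≤ -y by linarith)]
    simp only [Pi.sub_apply, hLdef, hRdef]
    rw [max_eq_left hmax]
    ring
  have e2 : ∫ y in (0:ℝ)..1, (R - L) y
      = ∫ y in (0:ℝ)..1, (((p:ℝ)+3)/2 + (-(((p:ℝ)+3)/2)) * y) := by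
    apply intervalIntegral.integral_congr
    intro y hy
    rw [uIcc_of_le (by norm_num : (0:ℝ) ≤ 1), mem_Icc] at hy
    obtain ⟨hya, hyb⟩ := hy
    have hmax : -2*y - 1 ≤ ((p:ℝ)+1)*y - 1 := by
      nlinarith [mul_nonneg (show (0:ℝ) ≤ (p:ℝ)+3 by linarith) (show (0:ℝ) ≤ y by linarith)]
    simp only [Pi.sub_apply, hLdef, hRdef]
    rw [max_eq_right hmax]
    ring
  rw [e1, e2, int_lin, int_lin]
  congr 1
  ring
lemma vol_S2 (p : ℤ) (hp : 1 ≤ p) :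
    volume (S2 p) = ENNReal.ofReal (((p:ℝ)+4)/2) := by
  have hP : (1:ℝ) ≤ (p:ℝ) := by exact_mod_cast hp
  set L : ℝ → ℝ := fun y => max ((p:ℝ)*y - 1) (-2*y - 1) with hLdef
  set R : ℝ → ℝ := fun y => ((p:ℝ)+1+((p:ℝ)-1)*y)/2 with hRdef
  have hL : Continuous L := Continuous.max (by fun_prop) (by fun_prop)
  have hR : Continuous R := by fun_prop
  have hset : interior (S2 p) = Prod.swap ⁻¹' (regionBetween L R (Ioo (-1:ℝ) 1)) := by
    rw [interior_S2]
    ext ⟨x, y⟩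
    simp only [regionBetween, mem_setOf_eq, mem_preimage, Prod.swap_prod_mk, mem_Ioo,
      hLdef, hRdef, max_lt_iff]
    constructor
    · rintro ⟨h1, h2, h3, h4⟩
      have hy2 : -1 < y := by
        by_contra hcon
        push_neg at hcon
        nlinarith [mul_nonneg (show (0:ℝ) ≤ (p:ℝ)+3 by linarith) (show (0:ℝ) ≤ -y - 1 by linarith)]
      exact ⟨⟨hy2, by linarith⟩, ⟨by linarith, by linarith⟩, by linarith⟩
    · rintro ⟨⟨hy2, hy1⟩, ⟨hx1, hx2⟩, hx3⟩
      exact ⟨by linarith, by linarith, by linarith, by linarith⟩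
  have hLR : ∀ y ∈ Ioo (-1:ℝ) 1, L y ≤ R y := by
    rintro y ⟨hy1, hy2⟩
    rw [hLdef, hRdef]
    simp only [max_le_iff]
    constructor
    · nlinarith [mul_nonneg (show (0:ℝ) ≤ (p:ℝ)+1 by linarith) (show (0:ℝ) ≤ 1 - y by linarith)]
    · nlinarith [mul_nonneg (show (0:ℝ) ≤ (p:ℝ)+3 by linarith) (show (0:ℝ) ≤ 1 + y by linarith)]
  rw [vol_eq_interior (by rw [← Qpoly2_eq p hp]; exact convex_convexHull ℝ _), hset,
    vol_region L R hL hR hLR]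
  have hcont : Continuous (R - L) := hR.sub hL
  rw [← integral_Ioc_eq_integral_Ioo' (measure_singleton _),
    ← intervalIntegral.integral_of_le (by norm_num : (-1:ℝ) ≤ 1),
    ← intervalIntegral.integral_add_adjacent_intervals
      (hcont.intervalIntegrable (-1) 0) (hcont.intervalIntegrable 0 1)]
  have e1 : ∫ y in (-1:ℝ)..0, (R - L) y
      = ∫ y in (-1:ℝ)..0, (((p:ℝ)+3)/2 + ((p:ℝ)+3)/2 * y) := by
    apply intervalIntegral.integral_congr
    intro y hy
    rw [uIcc_of_le (by norm_num : (-1:ℝ) ≤ 0), mem_Icc] at hy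
    obtain ⟨hya, hyb⟩ := hy
    have hmax : (p:ℝ)*y - 1 ≤ -2*y - 1 := by
      nlinarith [mul_nonneg (show (0:ℝ) ≤ (p:ℝ)+2 by linarith) (show (0:ℝ) ≤ -y by linarith)]
    simp only [Pi.sub_apply, hLdef, hRdef]
    rw [max_eq_right hmax]
    ring
  have e2 : ∫ y in (0:ℝ)..1, (R - L) y
      = ∫ y in (0:ℝ)..1, (((p:ℝ)+3)/2 + (-(((p:ℝ)+1)/2)) * y) := by
    apply intervalIntegral.integral_congr
    intro y hy
    rw [uIcc_of_le (by norm_num : (0:ℝ) ≤ 1), mem_Icc] at hy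
    obtain ⟨hya, hyb⟩ := hy
    have hmax : -2*y - 1 ≤ (p:ℝ)*y - 1 := by
      nlinarith [mul_nonneg (show (0:ℝ) ≤ (p:ℝ)+2 by linarith) (show (0:ℝ) ≤ y by linarith)]
    simp only [Pi.sub_apply, hLdef, hRdef]
    rw [max_eq_left hmax]
    ring
  rw [e1, e2, int_lin, int_lin]
  congr 1
  ring

lemma vol_S3 (p : ℤ) (hp : 1 ≤ p) :
    volume (S3 p) = ENNReal.ofReal (((p:ℝ)+5)/2) := by
  have hP : (1:ℝ) ≤ (p:ℝ) := by exact_mod_cast hp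
  set L : ℝ → ℝ := fun y => max ((p:ℝ)*y - 1) (-y - 1) with hLdef
  set R : ℝ → ℝ := fun y => ((p:ℝ)+1+((p:ℝ)-1)*y)/2 with hRdef
  have hL : Continuous L := Continuous.max (by fun_prop) (by fun_prop)
  have hR : Continuous R := by fun_prop
  have hset : interior (S3 p) = Prod.swap ⁻¹' (regionBetween L R (Ioo (-1:ℝ) 1)) := by
    rw [interior_S3]
    ext ⟨x, y⟩
    simp only [regionBetween, mem_setOf_eq, mem_preimage, Prod.swap_prod_mk, mem_Ioo,
      hLdef, hRdef, max_lt_iff]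
    constructor
    · rintro ⟨h1, h2, h3, h4, h5⟩
      exact ⟨⟨by linarith, by linarith⟩, ⟨by linarith, by linarith⟩, by linarith⟩
    · rintro ⟨⟨hy2, hy1⟩, ⟨hx1, hx2⟩, hx3⟩
      exact ⟨by linarith, by linarith, by linarith, by linarith, by linarith⟩
  have hLR : ∀ y ∈ Ioo (-1:ℝ) 1, L y ≤ R y := by
    rintro y ⟨hy1, hy2⟩
    rw [hLdef, hRdef]
    simp only [max_le_iff]
    constructor
    · nlinarith [mul_nonneg (show (0:ℝ) ≤ (p:ℝ)+1 by linarith) (show (0:ℝ) ≤ 1 - y by linarith)]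
    · nlinarith [mul_nonneg (show (0:ℝ) ≤ (p:ℝ)+1 by linarith) (show (0:ℝ) ≤ 1 + y by linarith)]
  rw [vol_eq_interior (by rw [← Qpoly3_eq p hp]; exact convex_convexHull ℝ _), hset,
    vol_region L R hL hR hLR]
  have hcont : Continuous (R - L) := hR.sub hL
  rw [← integral_Ioc_eq_integral_Ioo' (measure_singleton _),
    ← intervalIntegral.integral_of_le (by norm_num : (-1:ℝ) ≤ 1),
    ← intervalIntegral.integral_add_adjacent_intervals
      (hcont.intervalIntegrable (-1) 0) (hcont.intervalIntegrable 0 1)]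
  have e1 : ∫ y in (-1:ℝ)..0, (R - L) y
      = ∫ y in (-1:ℝ)..0, (((p:ℝ)+3)/2 + (((p:ℝ)+1)/2) * y) := by
    apply intervalIntegral.integral_congr
    intro y hy
    rw [uIcc_of_le (by norm_num : (-1:ℝ) ≤ 0), mem_Icc] at hy
    obtain ⟨hya, hyb⟩ := hy
    have hmax : (p:ℝ)*y - 1 ≤ -y - 1 := by
      nlinarith [mul_nonneg (show (0:ℝ) ≤ (p:ℝ)+1 by linarith) (show (0:ℝ) ≤ -y by linarith)]
    simp only [Pi.sub_apply, hLdef, hRdef]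
    rw [max_eq_right hmax]
    ring
  have e2 : ∫ y in (0:ℝ)..1, (R - L) y
      = ∫ y in (0:ℝ)..1, (((p:ℝ)+3)/2 + (-(((p:ℝ)+1)/2)) * y) := by
    apply intervalIntegral.integral_congr
    intro y hy
    rw [uIcc_of_le (by norm_num : (0:ℝ) ≤ 1), mem_Icc] at hy
    obtain ⟨hya, hyb⟩ := hy
    have hmax : -y - 1 ≤ (p:ℝ)*y - 1 := by
      nlinarith [mul_nonneg (show (0:ℝ) ≤ (p:ℝ)+1 by linarith) (show (0:ℝ) ≤ y by linarith)]
    simp only [Pi.sub_apply, hLdef, hRdef]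
    rw [max_eq_left hmax]
    ring
  rw [e1, e2, int_lin, int_lin]
  congr 1
  ring

lemma ncard_f1 (p : ℤ) (hp : 1 ≤ p) :
    ({((1:ℝ), (-1:ℝ)), ((p:ℝ), 1), ((-1:ℝ), (0:ℝ))} : Set (ℝ × ℝ)).ncard = 3 := by
  rw [Set.ncard_insert_of_notMem (by norm_num) (Set.toFinite _),
    Set.ncard_insert_of_notMem (by norm_num) (Set.toFinite _), Set.ncard_singleton]

lemma ncard_f1o (p : ℤ) (hp : 1 ≤ p) :
    ({(((p:ℝ)+1)/2, (0:ℝ)), ((1:ℝ), (-1:ℝ)), ((p:ℝ), 1), ((-1:ℝ), (0:ℝ))} :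
      Set (ℝ × ℝ)).ncard = 4 := by
  have hP : (1:ℝ) ≤ (p:ℝ) := by exact_mod_cast hp
  have h0 : (((p:ℝ)+1)/2, (0:ℝ)) ∉
      ({((1:ℝ), (-1:ℝ)), ((p:ℝ), 1), ((-1:ℝ), (0:ℝ))} : Set (ℝ × ℝ)) := by
    simp only [Set.mem_insert_iff, Set.mem_singleton_iff, Prod.mk.injEq]
    push_neg
    refine ⟨fun h => by norm_num, fun h => by norm_num, fun h => by linarith⟩
  rw [Set.ncard_insert_of_notMem h0 (Set.toFinite _), ncard_f1 p hp]

lemma ncard_f2 (p : ℤ) (hp : 1 ≤ p) :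
    ({((1:ℝ), (-1:ℝ)), ((p:ℝ), 1), ((p:ℝ)-1, 1), ((-1:ℝ), (0:ℝ))} : Set (ℝ × ℝ)).ncard = 4 := by
  have hB : ((p:ℝ), (1:ℝ)) ∉ ({((p:ℝ)-1, 1), ((-1:ℝ), (0:ℝ))} : Set (ℝ × ℝ)) := by
    simp only [Set.mem_insert_iff, Set.mem_singleton_iff, Prod.mk.injEq]
    push_neg
    refine ⟨fun h => by linarith, fun h => by norm_num⟩
  rw [Set.ncard_insert_of_notMem (by norm_num) (Set.toFinite _),
    Set.ncard_insert_of_notMem hB (Set.toFinite _),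
    Set.ncard_insert_of_notMem (by norm_num) (Set.toFinite _), Set.ncard_singleton]

lemma ncard_f2o (p : ℤ) (hp : 1 ≤ p) :
    ({(((p:ℝ)+1)/2, (0:ℝ)), ((1:ℝ), (-1:ℝ)), ((p:ℝ), 1), ((p:ℝ)-1, 1), ((-1:ℝ), (0:ℝ))} :
      Set (ℝ × ℝ)).ncard = 5 := by
  have hP : (1:ℝ) ≤ (p:ℝ) := by exact_mod_cast hp
  have h0 : (((p:ℝ)+1)/2, (0:ℝ)) ∉
      ({((1:ℝ), (-1:ℝ)), ((p:ℝ), 1), ((p:ℝ)-1, 1), ((-1:ℝ), (0:ℝ))} : Set (ℝ × ℝ)) := by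
    simp only [Set.mem_insert_iff, Set.mem_singleton_iff, Prod.mk.injEq]
    push_neg
    refine ⟨fun h => by norm_num, fun h => by norm_num, fun h => by norm_num,
      fun h => by linarith⟩
  rw [Set.ncard_insert_of_notMem h0 (Set.toFinite _), ncard_f2 p hp]

lemma ncard_f3 (p : ℤ) (hp : 1 ≤ p) :
    ({((1:ℝ), (-1:ℝ)), ((p:ℝ), 1), ((p:ℝ)-1, 1), ((-1:ℝ), (0:ℝ)), ((0:ℝ), (-1:ℝ))} :
      Set (ℝ × ℝ)).ncard = 5 := by
  have hB : ((p:ℝ), (1:ℝ)) ∉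
      ({((p:ℝ)-1, 1), ((-1:ℝ), (0:ℝ)), ((0:ℝ), (-1:ℝ))} : Set (ℝ × ℝ)) := by
    simp only [Set.mem_insert_iff, Set.mem_singleton_iff, Prod.mk.injEq]
    push_neg
    refine ⟨fun h => by linarith, fun h => by norm_num, fun h => by norm_num⟩
  rw [Set.ncard_insert_of_notMem (by norm_num) (Set.toFinite _),
    Set.ncard_insert_of_notMem hB (Set.toFinite _),
    Set.ncard_insert_of_notMem (by norm_num) (Set.toFinite _),
    Set.ncard_insert_of_notMem (by norm_num) (Set.toFinite _), Set.ncard_singleton]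

lemma ncard_f3o (p : ℤ) (hp : 1 ≤ p) :
    ({(((p:ℝ)+1)/2, (0:ℝ)), ((1:ℝ), (-1:ℝ)), ((p:ℝ), 1), ((p:ℝ)-1, 1), ((-1:ℝ), (0:ℝ)),
      ((0:ℝ), (-1:ℝ))} : Set (ℝ × ℝ)).ncard = 6 := by
  have hP : (1:ℝ) ≤ (p:ℝ) := by exact_mod_cast hp
  have h0 : (((p:ℝ)+1)/2, (0:ℝ)) ∉
      ({((1:ℝ), (-1:ℝ)), ((p:ℝ), 1), ((p:ℝ)-1, 1), ((-1:ℝ), (0:ℝ)),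
        ((0:ℝ), (-1:ℝ))} : Set (ℝ × ℝ)) := by
    simp only [Set.mem_insert_iff, Set.mem_singleton_iff, Prod.mk.injEq]
    push_neg
    refine ⟨fun h => by norm_num, fun h => by norm_num, fun h => by norm_num,
      fun h => by linarith, fun h => by norm_num⟩
  rw [Set.ncard_insert_of_notMem h0 (Set.toFinite _), ncard_f3 p hp]

lemma interior_ncard_even (p : ℤ) (hp : 1 ≤ p) (hev : Even p) :
    (((p/2 + 1 : ℤ)).toNat : ℚ) = (p : ℚ) / 2 + 1 := by
  obtain ⟨q, rfl⟩ := hev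
  have h2 : (q+q)/2 = q := by omega
  rw [h2]
  have h3 : (((q + 1 : ℤ)).toNat : ℚ) = (q:ℚ) + 1 := by
    have h4 := Int.toNat_of_nonneg (show (0:ℤ) ≤ q + 1 by omega)
    exact_mod_cast h4
  rw [h3]
  push_cast
  ring

lemma interior_ncard_odd (p : ℤ) (hp : 1 ≤ p) (hodd : Odd p) :
    (((p/2 + 1 : ℤ)).toNat : ℚ) = ((p : ℚ) - 1) / 2 + 1 := by
  obtain ⟨q, rfl⟩ := hodd
  have h2 : (2*q+1)/2 = q := by omega
  rw [h2]
  have h3 : (((q + 1 : ℤ)).toNat : ℚ) = (q:ℚ) + 1 := by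
    have h4 := Int.toNat_of_nonneg (show (0:ℤ) ≤ q + 1 by omega)
    exact_mod_cast h4
  rw [h3]
  push_cast
  ring


/-- for p ≥ 1 and k ∈ {1,2,3}: area(Q_p^[k]) = (p+k)/2 + 1; the number of
lattice points on ∂Q_p^[k] is k+2 for p even and k+3 for p odd; the number of interior
lattice points is p/2 + 1 for p even and (p−1)/2 + 1 for p odd. -/
theorem stmt8 (p : ℤ) (hp : 1 ≤ p) (k : ℕ) (hk : k ∈ ({1, 2, 3} : Set ℕ)) :
    MeasureTheory.volume (Qpoly p k) = ENNReal.ofReal (((p : ℝ) + (k : ℝ)) / 2 + 1) ∧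
    (Even p → (frontier (Qpoly p k) ∩ latticePts).ncard = k + 2) ∧
    (Odd p → (frontier (Qpoly p k) ∩ latticePts).ncard = k + 3) ∧
    (Even p → ((interior (Qpoly p k) ∩ latticePts).ncard : ℚ) = (p : ℚ) / 2 + 1) ∧
    (Odd p → ((interior (Qpoly p k) ∩ latticePts).ncard : ℚ) = ((p : ℚ) - 1) / 2 + 1) := by
  have hcast : ∀ h : 1 ≤ p, ((( (p/2 + 1 : ℤ)).toNat : ℚ)) = (((p/2 + 1 : ℤ)).toNat : ℚ) :=
    fun _ => rfl
  simp only [Set.mem_insert_iff, Set.mem_singleton_iff] at hk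
  rcases hk with rfl | rfl | rfl
  · have hQ : Qpoly p 1 = S1 p := by rw [show Qpoly p 1 = Qpoly1 p from rfl, Qpoly1_eq p hp]
    refine ⟨?_, ?_, ?_, ?_, ?_⟩
    · rw [hQ, vol_S1 p hp]
      congr 1
      push_cast
      ring
    · intro hev
      rw [hQ, frontier_lattice1 p hp, if_pos hev, ncard_f1 p hp]
    · intro hodd
      rw [hQ, frontier_lattice1 p hp, if_neg (by rwa [Int.not_even_iff_odd]), ncard_f1o p hp]
    · intro hev
      rw [hQ, interior_lattice1 p hp, ncard_interior_lattice p hp]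
      exact_mod_cast interior_ncard_even p hp hev
    · intro hodd
      rw [hQ, interior_lattice1 p hp, ncard_interior_lattice p hp]
      exact_mod_cast interior_ncard_odd p hp hodd
  · have hQ : Qpoly p 2 = S2 p := by rw [show Qpoly p 2 = Qpoly2 p from rfl, Qpoly2_eq p hp]
    refine ⟨?_, ?_, ?_, ?_, ?_⟩
    · rw [hQ, vol_S2 p hp]
      congr 1
      push_cast
      ring
    · intro hev
      rw [hQ, frontier_lattice2 p hp, if_pos hev, ncard_f2 p hp]
    · intro hodd
      rw [hQ, frontier_lattice2 p hp, if_neg (by rwa [Int.not_even_iff_odd]), ncard_f2o p hp]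
    · intro hev
      rw [hQ, interior_lattice2 p hp, ncard_interior_lattice p hp]
      exact_mod_cast interior_ncard_even p hp hev
    · intro hodd
      rw [hQ, interior_lattice2 p hp, ncard_interior_lattice p hp]
      exact_mod_cast interior_ncard_odd p hp hodd
  · have hQ : Qpoly p 3 = S3 p := by rw [show Qpoly p 3 = Qpoly3 p from rfl, Qpoly3_eq p hp]
    refine ⟨?_, ?_, ?_, ?_, ?_⟩
    · rw [hQ, vol_S3 p hp]
      congr 1
      push_cast
      ring
    · intro hev
      rw [hQ, frontier_lattice3 p hp, if_pos hev, ncard_f3 p hp]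
    · intro hodd
      rw [hQ, frontier_lattice3 p hp, if_neg (by rwa [Int.not_even_iff_odd]), ncard_f3o p hp]
    · intro hev
      rw [hQ, interior_lattice3 p hp, ncard_interior_lattice p hp]
      exact_mod_cast interior_ncard_even p hp hev
    · intro hodd
      rw [hQ, interior_lattice3 p hp, ncard_interior_lattice p hp]
      exact_mod_cast interior_ncard_odd p hp hodd
end
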